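/- In any finite poset, the maximum size of an antichain equals the minimum number of chains needed to partition the elements. -/

import Mathlib

open Finset

section DilworthAux

set_option linter.unusedSectionVars false

variable {α : Type*} [PartialOrder α] [DecidableEq α]

/-- The set of cardinalities of antichains contained in `S`. -/
private def acSet (S : Finset α) : Set ℕ :=
  {m | ∃ A : Finset α, A ⊆ S ∧ IsAntichain (· ≤ ·) (A : Set α) ∧ m = A.card}

private lemma acSet_nonempty (S : Finset α) : (acSet S).Nonempty :=
  ⟨0, ∅, by simp, by simp only [Finset.coe_empty]; exact Set.pairwise_empty _, by simp⟩

private lemma acSet_bddAbove (S : Finset α) : BddAbove (acSet S) := by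
  refine ⟨S.card, ?_⟩
  rintro m ⟨A, hAS, -, rfl⟩
  exact Finset.card_le_card hAS

/-- The maximal size of an antichain in `S`. -/
private noncomputable def maxAC (S : Finset α) : ℕ := sSup (acSet S)

private lemma maxAC_spec (S : Finset α) :
    ∃ A : Finset α, A ⊆ S ∧ IsAntichain (· ≤ ·) (A : Set α) ∧ maxAC S = A.card :=
  Nat.sSup_mem (acSet_nonempty S) (acSet_bddAbove S)

private lemma le_maxAC {S A : Finset α} (hAS : A ⊆ S)
    (hA : IsAntichain (· ≤ ·) (A : Set α)) : A.card ≤ maxAC S :=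
  le_csSup (acSet_bddAbove S) ⟨A, hAS, hA, rfl⟩

private lemma maxAC_mono {S T : Finset α} (h : S ⊆ T) : maxAC S ≤ maxAC T := by
  obtain ⟨A, hAS, hA, hcard⟩ := maxAC_spec S
  rw [hcard]
  exact le_maxAC (hAS.trans h) hA

/-- Easy direction: any antichain in `S` injects into any chain partition of `S`. -/
private lemma antichain_card_le_chains {S A : Finset α} {𝒞 : Finset (Finset α)}
    (hAS : A ⊆ S) (hA : IsAntichain (· ≤ ·) (A : Set α))
    (hch : ∀ C ∈ 𝒞, IsChain (· ≤ ·) (C : Set α))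
    (hpart : ∀ x ∈ S, ∃! C, C ∈ 𝒞 ∧ x ∈ C) : A.card ≤ 𝒞.card := by
  classical
  set f : α → Finset α := fun x =>
    if h : ∃ C, C ∈ 𝒞 ∧ x ∈ C then h.choose else ∅ with hf
  have hspec : ∀ x ∈ S, f x ∈ 𝒞 ∧ x ∈ f x := by
    intro x hx
    obtain ⟨C, hC, -⟩ := hpart x hx
    have h : ∃ C, C ∈ 𝒞 ∧ x ∈ C := ⟨C, hC⟩
    simpa [hf, dif_pos h] using h.choose_spec
  refine Finset.card_le_card_of_injOn f (fun x hx => (hspec x (hAS hx)).1) ?_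
  intro x hx y hy hxy
  by_contra hne
  have hxc := (hspec x (hAS (by exact_mod_cast hx))).2
  have hyc := (hspec y (hAS (by exact_mod_cast hy))).2
  rw [hxy] at hxc
  rcases hch (f y) (hspec y (hAS (by exact_mod_cast hy))).1 hxc hyc hne with h | h
  · exact hA hx hy hne h
  · exact hA hy hx (Ne.symm hne) h

/-- Key lemma: every maximum antichain meets every chain in a minimum partition. -/
private lemma antichain_meets_chain {S : Finset α} {𝒞 : Finset (Finset α)}
    (hch : ∀ C ∈ 𝒞, IsChain (· ≤ ·) (C : Set α))
    (hpart : ∀ x ∈ S, ∃! C, C ∈ 𝒞 ∧ x ∈ C)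
    {A : Finset α} (hAS : A ⊆ S) (hA : IsAntichain (· ≤ ·) (A : Set α))
    (hcard : 𝒞.card = A.card) {C : Finset α} (hC : C ∈ 𝒞) :
    ∃ x ∈ A, x ∈ C := by
  classical
  set f : α → Finset α := fun x =>
    if h : ∃ C, C ∈ 𝒞 ∧ x ∈ C then h.choose else ∅ with hf
  have hspec : ∀ x ∈ S, f x ∈ 𝒞 ∧ x ∈ f x := by
    intro x hx
    obtain ⟨C', hC', -⟩ := hpart x hx
    have h : ∃ C, C ∈ 𝒞 ∧ x ∈ C := ⟨C', hC'⟩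
    simpa [hf, dif_pos h] using h.choose_spec
  have hinj : Set.InjOn f ↑A := by
    intro x hx y hy hxy
    by_contra hne
    have hxc := (hspec x (hAS (by exact_mod_cast hx))).2
    have hyc := (hspec y (hAS (by exact_mod_cast hy))).2
    rw [hxy] at hxc
    rcases hch (f y) (hspec y (hAS (by exact_mod_cast hy))).1 hxc hyc hne with h | h
    · exact hA hx hy hne h
    · exact hA hy hx (Ne.symm hne) h
  have himg : A.image f = 𝒞 := by
    apply Finset.eq_of_subset_of_card_le
    · intro C' hC'
      obtain ⟨x, hx, rfl⟩ := Finset.mem_image.1 hC'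
      exact (hspec x (hAS hx)).1
    · rw [Finset.card_image_of_injOn hinj, hcard]
  rw [← himg] at hC
  obtain ⟨x, hx, rfl⟩ := Finset.mem_image.1 hC
  exact ⟨x, hx, (hspec x (hAS hx)).2⟩

/-- Main lemma: `S` can be partitioned into at most `maxAC S` chains. -/
private lemma dilworth_aux (S : Finset α) :
    ∃ 𝒞 : Finset (Finset α),
      (∀ C ∈ 𝒞, IsChain (· ≤ ·) (C : Set α)) ∧
      (∀ C ∈ 𝒞, C ⊆ S) ∧
      (∀ x ∈ S, ∃! C, C ∈ 𝒞 ∧ x ∈ C) ∧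
      𝒞.card ≤ maxAC S := by
  classical
  induction S using Finset.strongInduction with
  | _ S IH =>
  rcases S.eq_empty_or_nonempty with rfl | hS
  · exact ⟨∅, by simp, by simp, by simp, by simp⟩
  obtain ⟨a, haS, hamax⟩ := S.exists_maximal hS
  set S' := S.erase a with hS'
  have haS' : a ∉ S' := Finset.notMem_erase a S
  have hS'S : S' ⊆ S := Finset.erase_subset a S
  have hS'ss : S' ⊂ S := Finset.erase_ssubset haS
  obtain ⟨𝒞, hch, hsub, hpart, hcard⟩ := IH S' hS'ss
  set k := maxAC S' with hk
  have hkS : k ≤ maxAC S := maxAC_mono hS'S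
  obtain ⟨A₀, hA₀S, hA₀, hA₀card⟩ := maxAC_spec S'
  have h𝒞card : 𝒞.card = k := by
    refine le_antisymm hcard ?_
    rw [hk, hA₀card]
    exact antichain_card_le_chains hA₀S hA₀ hch hpart
  set P : α → Prop := fun x => ∃ A : Finset α, A ⊆ S' ∧
      IsAntichain (· ≤ ·) (A : Set α) ∧ A.card = k ∧ x ∈ A with hP
  have key : ∀ C ∈ 𝒞, ∃ b ∈ C, P b ∧ ∀ x ∈ C, P x → x ≤ b := by
    intro C hC
    set T := C.filter P with hT
    have hTC : T ⊆ C := Finset.filter_subset _ _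
    have hTne : T.Nonempty := by
      obtain ⟨x, hxA, hxC⟩ := antichain_meets_chain hch hpart hA₀S hA₀
        (by rw [h𝒞card]; exact hA₀card) hC
      exact ⟨x, Finset.mem_filter.2 ⟨hxC, A₀, hA₀S, hA₀, hA₀card.symm, hxA⟩⟩
    obtain ⟨b, hbT, hbmax⟩ := T.exists_maximal hTne
    refine ⟨b, hTC hbT, (Finset.mem_filter.1 hbT).2, ?_⟩
    intro x hxC hxP
    have hxT : x ∈ T := Finset.mem_filter.2 ⟨hxC, hxP⟩
    rcases eq_or_ne x b with rfl | hne
    · exact le_refl x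
    rcases hch C hC (by exact_mod_cast hxC) (by exact_mod_cast hTC hbT) hne with h | h
    · exact h
    · exact absurd (le_antisymm (hbmax hxT h) h) hne
  choose g hg₁ hg₂ hg₃ using key
  have hdisj : ∀ C ∈ 𝒞, ∀ D ∈ 𝒞, ∀ x, x ∈ C → x ∈ D → C = D := by
    intro C hC D hD x hxC hxD
    have hxS' : x ∈ S' := hsub C hC hxC
    obtain ⟨E, -, hEuniq⟩ := hpart x hxS'
    rw [hEuniq C ⟨hC, hxC⟩, hEuniq D ⟨hD, hxD⟩]
  have hgle : ∀ C, ∀ hC : C ∈ 𝒞, ∀ D, ∀ hD : D ∈ 𝒞, g C hC ≤ g D hD → C = D := by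
    intro C hC D hD hle
    by_contra hne
    obtain ⟨A, hAS, hA, hAcard, hgDA⟩ := hg₂ D hD
    obtain ⟨x, hxA, hxC⟩ := antichain_meets_chain hch hpart hAS hA
      (by rw [h𝒞card, hAcard]) hC
    have hxg : x ≤ g C hC := hg₃ C hC x hxC ⟨A, hAS, hA, hAcard, hxA⟩
    have hxgD : x ≤ g D hD := hxg.trans hle
    rcases eq_or_ne x (g D hD) with heqx | hxne
    · have heq : g C hC = g D hD := le_antisymm hle (heqx ▸ hxg)
      exact hne (hdisj C hC D hD (g C hC) (hg₁ C hC) (heq ▸ hg₁ D hD))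
    · exact hA (by exact_mod_cast hxA) (by exact_mod_cast hgDA) hxne hxgD
  by_cases hcomp : ∃ C, ∃ hC : C ∈ 𝒞, g C hC ≤ a ∨ a ≤ g C hC
  · -- comparable case: build the chain K through g C, remove it, recurse
    obtain ⟨C, hC, hcase⟩ := hcomp
    have hgC𝒞 : g C hC ∈ C := hg₁ C hC
    have hgCS' : g C hC ∈ S' := hsub C hC hgC𝒞
    have hgCa : g C hC ≤ a := by
      rcases hcase with h | h
      · exact h
      · have hne : a ≠ g C hC := fun he => haS' (he ▸ hgCS')
        exact absurd (le_antisymm h (hamax (hS'S hgCS') h)) hne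
    set K : Finset α := insert a (C.filter (fun x => x ≤ g C hC)) with hKdef
    have haK : a ∈ K := Finset.mem_insert_self _ _
    have hKS : K ⊆ S := by
      intro x hx
      rcases Finset.mem_insert.1 hx with rfl | hx
      · exact haS
      · exact hS'S (hsub C hC (Finset.filter_subset _ _ hx))
    have hKchain : IsChain (· ≤ ·) (K : Set α) := by
      intro x hx y hy hne
      simp only [hKdef, Finset.coe_insert, Set.mem_insert_iff, Finset.mem_coe,
        Finset.mem_filter] at hx hy
      rcases hx with rfl | ⟨hxC, hxle⟩
      · rcases hy with rfl | ⟨hyC, hyle⟩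
        · exact absurd rfl hne
        · exact Or.inr (hyle.trans hgCa)
      · rcases hy with rfl | ⟨hyC, hyle⟩
        · exact Or.inl (hxle.trans hgCa)
        · exact hch C hC (by exact_mod_cast hxC) (by exact_mod_cast hyC) hne
    set S'' := S \ K with hS''def
    have hS''S : S'' ⊆ S := Finset.sdiff_subset
    have haS'' : a ∉ S'' := fun h => (Finset.mem_sdiff.1 h).2 haK
    have hS''ss : S'' ⊂ S := ⟨hS''S, fun h => haS'' (h haS)⟩
    have hS''S' : S'' ⊆ S' := by
      intro x hx
      obtain ⟨hxS, hxK⟩ := Finset.mem_sdiff.1 hx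
      refine Finset.mem_erase.2 ⟨fun he => hxK (he ▸ haK), hxS⟩
    -- S'' has no antichain of size k
    have hS''AC : maxAC S'' < k := by
      obtain ⟨A, hAS'', hA, hAcard⟩ := maxAC_spec S''
      have hle : maxAC S'' ≤ k := maxAC_mono hS''S'
      rcases lt_or_eq_of_le hle with h | h
      · exact h
      exfalso
      obtain ⟨x, hxA, hxC⟩ := antichain_meets_chain hch hpart (hAS''.trans hS''S') hA
        (by rw [h𝒞card, ← hAcard, h]) hC
      have hxg : x ≤ g C hC := hg₃ C hC x hxC ⟨A, hAS''.trans hS''S', hA, by rw [← hAcard, h], hxA⟩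
      have hxK : x ∈ K := Finset.mem_insert_of_mem (Finset.mem_filter.2 ⟨hxC, hxg⟩)
      exact (Finset.mem_sdiff.1 (hAS'' hxA)).2 hxK
    obtain ⟨𝒟, hch𝒟, hsub𝒟, hpart𝒟, hcard𝒟⟩ := IH S'' hS''ss
    have hK𝒟 : K ∉ 𝒟 := fun h => haS'' (hsub𝒟 K h haK)
    refine ⟨insert K 𝒟, ?_, ?_, ?_, ?_⟩
    · intro C' hC'
      rcases Finset.mem_insert.1 hC' with rfl | h
      · exact hKchain
      · exact hch𝒟 C' h
    · intro C' hC'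
      rcases Finset.mem_insert.1 hC' with rfl | h
      · exact hKS
      · exact (hsub𝒟 C' h).trans hS''S
    · intro x hxS
      by_cases hxK : x ∈ K
      · refine ⟨K, ⟨Finset.mem_insert_self _ _, hxK⟩, ?_⟩
        rintro D ⟨hD, hxD⟩
        rcases Finset.mem_insert.1 hD with rfl | hD'
        · rfl
        · exact absurd hxK (fun h => (Finset.mem_sdiff.1 (hsub𝒟 D hD' hxD)).2 h)
      · have hxS'' : x ∈ S'' := Finset.mem_sdiff.2 ⟨hxS, hxK⟩
        obtain ⟨D, ⟨hD, hxD⟩, hDuniq⟩ := hpart𝒟 x hxS''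
        refine ⟨D, ⟨Finset.mem_insert_of_mem hD, hxD⟩, ?_⟩
        rintro E ⟨hE, hxE⟩
        rcases Finset.mem_insert.1 hE with rfl | hE'
        · exact absurd hxE hxK
        · exact hDuniq E ⟨hE', hxE⟩
    · calc (insert K 𝒟).card ≤ 𝒟.card + 1 := Finset.card_insert_le _ _
        _ ≤ maxAC S'' + 1 := by omega
        _ ≤ k := by omega
        _ ≤ maxAC S := hkS
  · -- incomparable case: a together with the g C's forms a bigger antichain
    push_neg at hcomp
    set B : Finset α := 𝒞.attach.image (fun C => g C.1 C.2) with hBdef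
    have hBmem : ∀ b ∈ B, ∃ C, ∃ hC : C ∈ 𝒞, g C hC = b := by
      intro b hb
      obtain ⟨⟨C, hC⟩, -, rfl⟩ := Finset.mem_image.1 hb
      exact ⟨C, hC, rfl⟩
    have hBS' : B ⊆ S' := by
      intro b hb
      obtain ⟨C, hC, rfl⟩ := hBmem b hb
      exact hsub C hC (hg₁ C hC)
    have haB : a ∉ B := fun h => haS' (hBS' h)
    have hBcard : B.card = k := by
      rw [hBdef, Finset.card_image_of_injOn, Finset.card_attach, h𝒞card]
      rintro ⟨C, hC⟩ - ⟨D, hD⟩ - h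
      simp only at h
      exact Subtype.ext (hdisj C hC D hD (g C hC) (hg₁ C hC) (h ▸ hg₁ D hD))
    have hBanti : IsAntichain (· ≤ ·) (B : Set α) := by
      intro x hx y hy hne hle
      obtain ⟨C, hC, rfl⟩ := hBmem x (by exact_mod_cast hx)
      obtain ⟨D, hD, rfl⟩ := hBmem y (by exact_mod_cast hy)
      obtain rfl := hgle C hC D hD hle
      exact hne rfl
    have hBanti' : IsAntichain (· ≤ ·) ((insert a B : Finset α) : Set α) := by
      intro x hx y hy hne hle
      simp only [Finset.coe_insert, Set.mem_insert_iff, Finset.mem_coe] at hx hy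
      rcases hx with rfl | hx
      · rcases hy with rfl | hy
        · exact hne rfl
        · obtain ⟨D, hD, rfl⟩ := hBmem y hy
          exact (hcomp D hD).2 hle
      · rcases hy with rfl | hy
        · obtain ⟨C, hC, rfl⟩ := hBmem x hx
          exact (hcomp C hC).1 hle
          
        · exact hBanti (by exact_mod_cast hx) (by exact_mod_cast hy) hne hle
    have hkS1 : k + 1 ≤ maxAC S := by
      have : (insert a B).card = k + 1 := by
        rw [Finset.card_insert_of_notMem haB, hBcard]
      rw [← this]
      refine le_maxAC ?_ hBanti'
      intro x hx
      rcases Finset.mem_insert.1 hx with rfl | hx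
      · exact haS
      · exact hS'S (hBS' hx)
    have ha𝒞 : {a} ∉ 𝒞 := fun h => haS' (hsub _ h (Finset.mem_singleton_self a))
    refine ⟨insert {a} 𝒞, ?_, ?_, ?_, ?_⟩
    · intro C' hC'
      rcases Finset.mem_insert.1 hC' with rfl | h
      · rw [Finset.coe_singleton]
        intro x hx y hy hne
        exact absurd (hx.trans hy.symm) hne
      · exact hch C' h
    · intro C' hC'
      rcases Finset.mem_insert.1 hC' with rfl | h
      · simpa using haS
      · exact (hsub C' h).trans hS'S
    · intro x hxS
      rcases eq_or_ne x a with rfl | hxa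
      · refine ⟨{x}, ⟨Finset.mem_insert_self _ _, Finset.mem_singleton_self x⟩, ?_⟩
        rintro D ⟨hD, hxD⟩
        rcases Finset.mem_insert.1 hD with rfl | hD'
        · rfl
        · exact absurd (hsub D hD' hxD) haS'
      · have hxS' : x ∈ S' := Finset.mem_erase.2 ⟨hxa, hxS⟩
        obtain ⟨D, ⟨hD, hxD⟩, hDuniq⟩ := hpart x hxS'
        refine ⟨D, ⟨Finset.mem_insert_of_mem hD, hxD⟩, ?_⟩
        rintro E ⟨hE, hxE⟩
        rcases Finset.mem_insert.1 hE with rfl | hE'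
        · exact absurd (Finset.mem_singleton.1 hxE) hxa
        · exact hDuniq E ⟨hE', hxE⟩
    · calc (insert {a} 𝒞).card ≤ 𝒞.card + 1 := Finset.card_insert_le _ _
        _ = k + 1 := by rw [h𝒞card]
        _ ≤ maxAC S := hkS1

end DilworthAux

/-- **Dilworth's theorem.** In any finite poset, the maximum size of an antichain
equals the minimum number of chains needed to partition the elements. -/
theorem dilworth {α : Type*} [Fintype α] [PartialOrder α] :
    sSup {m : ℕ | ∃ A : Finset α, IsAntichain (· ≤ ·) (A : Set α) ∧ m = A.card} =
    sInf {m : ℕ | ∃ 𝒞 : Finset (Finset α),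
        (∀ C ∈ 𝒞, IsChain (· ≤ ·) (C : Set α)) ∧
        (∀ x : α, ∃! C, C ∈ 𝒞 ∧ x ∈ C) ∧
        m = 𝒞.card} := by
  classical
  have hset : {m : ℕ | ∃ A : Finset α, IsAntichain (· ≤ ·) (A : Set α) ∧ m = A.card}
      = acSet (Finset.univ : Finset α) := by
    ext m
    simp only [acSet, Set.mem_setOf_eq]
    constructor
    · rintro ⟨A, h1, h2⟩; exact ⟨A, Finset.subset_univ A, h1, h2⟩
    · rintro ⟨A, -, h1, h2⟩; exact ⟨A, h1, h2⟩
  obtain ⟨𝒞, hch, hsub, hpart, hcard⟩ := dilworth_aux (Finset.univ : Finset α)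
  have hpart' : ∀ x : α, ∃! C, C ∈ 𝒞 ∧ x ∈ C := fun x => hpart x (Finset.mem_univ x)
  apply le_antisymm
  · refine le_csInf ⟨𝒞.card, 𝒞, hch, hpart', rfl⟩ ?_
    rintro n ⟨𝒟, hch𝒟, hpart𝒟, rfl⟩
    rw [hset]
    obtain ⟨A, hAS, hA, hAcard⟩ := maxAC_spec (Finset.univ : Finset α)
    rw [show maxAC (Finset.univ : Finset α) = sSup (acSet (Finset.univ : Finset α)) from rfl] at hAcard
    rw [show sSup (acSet (Finset.univ : Finset α)) = A.card from hAcard]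
    exact antichain_card_le_chains hAS hA hch𝒟 (fun x _ => hpart𝒟 x)
  · refine le_trans (Nat.sInf_le ⟨𝒞, hch, hpart', rfl⟩) ?_
    rw [hset]
    exact hcard
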